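/- Let (A; ∧, d) be an SMB algebra over ~ and let a,b,c,e ∈ A. The following are equivalent: (i) ([c]_~, [e]_~) belongs to the smallest congruence of the quotient algebra A/~ containing ([a]_~, [b]_~); (ii) (c,e) ∈ Cg(a,b) ∨ ~; (iii) there exist k ∈ ℕ, elements c = c_0, d_0, c_1, d_1, …, c_k, d_k = e of A with c_i ~ d_i for all 0 ≤ i ≤ k, and unary polynomials p_1, …, p_k of (A; ∧, d) such that {d_{i-1}, c_i} = {p_i(a), p_i(b)} for all 1 ≤ i ≤ k. -/

import Mathlib

/-- An equivalence relation on `A` compatible with the binary operation `m`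
and the ternary operation `d`, i.e. a congruence of the algebra `(A; m, d)`. -/
structure IsCongruence {A : Type*} (m : A → A → A) (d : A → A → A → A)
    (θ : A → A → Prop) : Prop where
  equiv : Equivalence θ
  compat_m : ∀ {a a' b b'}, θ a a' → θ b b' → θ (m a b) (m a' b')
  compat_d : ∀ {a a' b b' c c'}, θ a a' → θ b b' → θ c c' → θ (d a b c) (d a' b' c')

/-- `(A; m, d)` is an SMB algebra over the congruence `r`. -/
structure IsSMB {A : Type*} (m : A → A → A) (d : A → A → A → A)
    (r : A → A → Prop) : Prop where
  cong : IsCongruence m d r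
  idem_m : ∀ x, m x x = x
  idem_d : ∀ x, d x x x = x
  comm : ∀ x y, r (m x y) (m y x)
  assoc : ∀ x y z, r (m (m x y) z) (m x (m y z))
  proj : ∀ a b, r a b → m a b = b
  mal_left : ∀ a b, r a b → d a b b = a
  mal_right : ∀ a b, r a b → d b b a = a

/-- `(A; m, d)` is a regular SMB algebra over the congruence `r`. -/
structure IsRegularSMB {A : Type*} (m : A → A → A) (d : A → A → A → A)
    (r : A → A → Prop) : Prop where
  smb : IsSMB m d r
  reg1 : ∀ a b c, r (d a b c) (m (m a b) c)
  reg2 : ∀ a b, r (m a b) b → m a b = b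
  reg3 : ∀ x y z, d x y z = d (m (m y z) x) (m (m x z) y) (m (m x y) z)
  reg4 : ∀ x y, m (m x y) y = m x y

/-- The principal congruence generated by the pair `(a, b)`: the smallest
congruence of `(A; m, d)` containing `(a, b)`. -/
def Cg {A : Type*} (m : A → A → A) (d : A → A → A → A) (a b : A) : A → A → Prop :=
  fun x y => ∀ θ : A → A → Prop, IsCongruence m d θ → θ a b → θ x y

/-- The join of two congruences: the smallest congruence of `(A; m, d)`
containing both `ρ` and `σ`. -/
def congJoin {A : Type*} (m : A → A → A) (d : A → A → A → A)
    (ρ σ : A → A → Prop) : A → A → Prop :=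
  fun x y => ∀ θ : A → A → Prop, IsCongruence m d θ →
    (∀ u v, ρ u v → θ u v) → (∀ u v, σ u v → θ u v) → θ x y

/-- The unary polynomials of `(A; m, d)`: the smallest set of self-maps of `A`
containing the identity and all constants, closed under composition with the
basic operations `m` and `d`. -/
inductive UnaryPoly {A : Type*} (m : A → A → A) (d : A → A → A → A) : (A → A) → Prop
  | id : UnaryPoly m d (fun x => x)
  | const (c : A) : UnaryPoly m d (fun _ => c)
  | meet {p q : A → A} : UnaryPoly m d p → UnaryPoly m d q →
      UnaryPoly m d (fun x => m (p x) (q x))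
  | malcev {p q s : A → A} : UnaryPoly m d p → UnaryPoly m d q → UnaryPoly m d s →
      UnaryPoly m d (fun x => d (p x) (q x) (s x))


section SMBAux

variable {A : Type*} {m : A → A → A} {d : A → A → A → A}

theorem cg_isCong (a b : A) : IsCongruence m d (Cg m d a b) where
  equiv := ⟨fun x θ hθ _ => hθ.equiv.refl x,
    fun hxy θ hθ hab => hθ.equiv.symm (hxy θ hθ hab),
    fun h1 h2 θ hθ hab => hθ.equiv.trans (h1 θ hθ hab) (h2 θ hθ hab)⟩
  compat_m := fun h1 h2 θ hθ hab => hθ.compat_m (h1 θ hθ hab) (h2 θ hθ hab)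
  compat_d := fun h1 h2 h3 θ hθ hab =>
    hθ.compat_d (h1 θ hθ hab) (h2 θ hθ hab) (h3 θ hθ hab)

theorem cg_self (a b : A) : Cg m d a b a b := fun _ _ hab => hab

theorem congJoin_isCong (ρ σ : A → A → Prop) : IsCongruence m d (congJoin m d ρ σ) where
  equiv := ⟨fun x θ hθ _ _ => hθ.equiv.refl x,
    fun hxy θ hθ h1 h2 => hθ.equiv.symm (hxy θ hθ h1 h2),
    fun ha hb θ hθ h1 h2 => hθ.equiv.trans (ha θ hθ h1 h2) (hb θ hθ h1 h2)⟩
  compat_m := fun ha hb θ hθ h1 h2 => hθ.compat_m (ha θ hθ h1 h2) (hb θ hθ h1 h2)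
  compat_d := fun ha hb hc θ hθ h1 h2 =>
    hθ.compat_d (ha θ hθ h1 h2) (hb θ hθ h1 h2) (hc θ hθ h1 h2)

theorem congJoin_left {ρ σ : A → A → Prop} {x y : A} (hxy : ρ x y) :
    congJoin m d ρ σ x y := fun _ _ h1 _ => h1 _ _ hxy

theorem congJoin_right {ρ σ : A → A → Prop} {x y : A} (hxy : σ x y) :
    congJoin m d ρ σ x y := fun _ _ _ h2 => h2 _ _ hxy

theorem UnaryPoly.comp {p q : A → A} (hp : UnaryPoly m d p) (hq : UnaryPoly m d q) :
    UnaryPoly m d (fun x => p (q x)) := by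
  induction hp with
  | id => exact hq
  | const c => exact .const c
  | meet _ _ ih1 ih2 => exact .meet ih1 ih2
  | malcev _ _ _ ih1 ih2 ih3 => exact .malcev ih1 ih2 ih3

theorem poly_congr {θ : A → A → Prop} (hθ : IsCongruence m d θ) {p : A → A}
    (hp : UnaryPoly m d p) {x y : A} (hxy : θ x y) : θ (p x) (p y) := by
  induction hp with
  | id => exact hxy
  | const c => exact hθ.equiv.refl c
  | meet _ _ ih1 ih2 => exact hθ.compat_m ih1 ih2
  | malcev _ _ _ ih1 ih2 ih3 => exact hθ.compat_d ih1 ih2 ih3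

/-- single step relation: either `r`-related or a polynomial image of `{a,b}`. -/
def GRel (m : A → A → A) (d : A → A → A → A) (r : A → A → Prop) (a b : A) :
    A → A → Prop :=
  fun u v => r u v ∨ ∃ p : A → A, UnaryPoly m d p ∧ ({u, v} : Set A) = {p a, p b}

/-- Mal'cev chain predicate matching the theorem statement. -/
def Chain (m : A → A → A) (d : A → A → A → A) (r : A → A → Prop) (a b x y : A) : Prop :=
  ∃ (k : ℕ) (cs ds : ℕ → A) (p : ℕ → A → A),
    cs 0 = x ∧ ds k = y ∧
    (∀ i, i ≤ k → r (cs i) (ds i)) ∧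
    (∀ i, 1 ≤ i → i ≤ k → UnaryPoly m d (p i) ∧
      ({ds (i - 1), cs i} : Set A) = {p i a, p i b})

theorem Chain.snoc {r : A → A → Prop} {a b x y w z : A}
    (hc : Chain m d r a b x y) (q : A → A) (hq : UnaryPoly m d q)
    (hset : ({y, w} : Set A) = {q a, q b}) (hwz : r w z) :
    Chain m d r a b x z := by
  obtain ⟨k, cs, ds, p, h0, hk, hr, hp⟩ := hc
  refine ⟨k + 1, fun i => if i ≤ k then cs i else w,
    fun i => if i ≤ k then ds i else z,
    fun i => if i ≤ k then p i else q, by simp [h0], by simp, ?_, ?_⟩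
  · intro i hi
    by_cases hik : i ≤ k
    · simpa [hik] using hr i hik
    · simpa [hik] using hwz
  · intro i h1 h2
    by_cases hik : i ≤ k
    · have hik' : i - 1 ≤ k := by omega
      simpa [hik, hik'] using hp i h1 hik
    · have hkk : i = k + 1 := by omega
      subst hkk
      have e1 : k + 1 - 1 = k := by omega
      simp only [e1, if_neg hik, if_pos (le_refl k)]
      exact ⟨hq, by rw [hk]; exact hset⟩

theorem chain_to_E {r : A → A → Prop} {a b x y : A} (hc : Chain m d r a b x y) :
    Relation.ReflTransGen (GRel m d r a b) x y := by
  obtain ⟨k, cs, ds, p, h0, hk, hr, hp⟩ := hc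
  subst h0; subst hk
  have key : ∀ j, j ≤ k → Relation.ReflTransGen (GRel m d r a b) (cs 0) (ds j) := by
    intro j
    induction j with
    | zero => intro h0k; exact Relation.ReflTransGen.single (Or.inl (hr 0 h0k))
    | succ n ih =>
      intro hjk
      have h1 := ih (by omega)
      obtain ⟨hpoly, hset⟩ := hp (n + 1) (by omega) hjk
      have hG : GRel m d r a b (ds n) (cs (n + 1)) :=
        Or.inr ⟨p (n + 1), hpoly, hset⟩
      exact (h1.tail hG).tail (Or.inl (hr (n + 1) hjk))
  exact key k le_rfl

theorem E_to_chain {r : A → A → Prop} (hrefl : ∀ x, r x x) {a b x y : A}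
    (hE : Relation.ReflTransGen (GRel m d r a b) x y) : Chain m d r a b x y := by
  induction hE with
  | refl =>
    exact ⟨0, fun _ => x, fun _ => x, fun _ => id, rfl, rfl,
      fun _ _ => hrefl x, fun i h1 h2 => by omega⟩
  | @tail u v _ hG ih =>
    rcases hG with hr' | ⟨q, hq, hset⟩
    · exact ih.snoc (fun _ => u) (.const u) rfl hr'
    · exact ih.snoc q hq hset (hrefl v)

theorem G_poly {r : A → A → Prop} {a b : A} (hcong : IsCongruence m d r)
    {q : A → A} (hq : UnaryPoly m d q) {x y : A}
    (hE : Relation.ReflTransGen (GRel m d r a b) x y) :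
    Relation.ReflTransGen (GRel m d r a b) (q x) (q y) := by
  refine Relation.ReflTransGen.lift q ?_ _ _ hE
  rintro u v (huv | ⟨p, hp, hset⟩)
  · exact Or.inl (poly_congr hcong hq huv)
  · refine Or.inr ⟨fun t => q (p t), hq.comp hp, ?_⟩
    show ({q u, q v} : Set A) = {q (p a), q (p b)}
    rw [← Set.image_pair, hset, Set.image_pair]

theorem E_isCong {r : A → A → Prop} (hcong : IsCongruence m d r) (a b : A) :
    IsCongruence m d (Relation.ReflTransGen (GRel m d r a b)) := by
  have hsymm : Symmetric (GRel m d r a b) := by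
    rintro u v (huv | ⟨p, hp, hset⟩)
    · exact Or.inl (hcong.equiv.symm huv)
    · exact Or.inr ⟨p, hp, by rw [Set.pair_comm]; exact hset⟩
  refine ⟨⟨fun x => .refl, fun hxy => Std.Symm.symm (self := (haveI : Std.Symm (GRel m d r a b) := ⟨fun _ _ h => hsymm h⟩; inferInstanceAs (Std.Symm (Relation.ReflTransGen (GRel m d r a b))))) _ _ hxy,
    fun h1 h2 => h1.trans h2⟩, ?_, ?_⟩
  · intro x x' y y' hx hy
    have s1 : Relation.ReflTransGen (GRel m d r a b) (m x y) (m x' y) :=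
      G_poly hcong (.meet .id (.const y)) hx
    have s2 : Relation.ReflTransGen (GRel m d r a b) (m x' y) (m x' y') :=
      G_poly hcong (.meet (.const x') .id) hy
    exact s1.trans s2
  · intro x x' y y' z z' hx hy hz
    have s1 : Relation.ReflTransGen (GRel m d r a b) (d x y z) (d x' y z) :=
      G_poly hcong (.malcev .id (.const y) (.const z)) hx
    have s2 : Relation.ReflTransGen (GRel m d r a b) (d x' y z) (d x' y' z) :=
      G_poly hcong (.malcev (.const x') .id (.const z)) hy
    have s3 : Relation.ReflTransGen (GRel m d r a b) (d x' y' z) (d x' y' z') :=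
      G_poly hcong (.malcev (.const x') (.const y') .id) hz
    exact (s1.trans s2).trans s3

theorem E_ab {r : A → A → Prop} (a b : A) :
    Relation.ReflTransGen (GRel m d r a b) a b :=
  Relation.ReflTransGen.single (Or.inr ⟨fun t => t, .id, rfl⟩)

end SMBAux

/-- In an SMB algebra over `~`, the following are equivalent:
(i) `([c]_~, [e]_~)` lies in the principal congruence of the quotient algebra
`A/~` generated by `([a]_~, [b]_~)`; (ii) `(c,e) ∈ Cg(a,b) ∨ ~`;
(iii) there is a Mal'cev chain `c = c₀, d₀, c₁, d₁, …, c_k, d_k = e` with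
`cᵢ ~ dᵢ` and unary polynomials `pᵢ` with `{dᵢ₋₁, cᵢ} = {pᵢ(a), pᵢ(b)}`. -/
theorem smb_cg_join_tfae {A : Type*} (m : A → A → A) (d : A → A → A → A)
    (r : A → A → Prop) (h : IsSMB m d r) (a b c e : A)
    (mq : Quotient (Setoid.mk r h.cong.equiv) → Quotient (Setoid.mk r h.cong.equiv) →
      Quotient (Setoid.mk r h.cong.equiv))
    (dq : Quotient (Setoid.mk r h.cong.equiv) → Quotient (Setoid.mk r h.cong.equiv) →
      Quotient (Setoid.mk r h.cong.equiv) → Quotient (Setoid.mk r h.cong.equiv))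
    (hmq : ∀ x y : A, mq (Quotient.mk _ x) (Quotient.mk _ y) = Quotient.mk _ (m x y))
    (hdq : ∀ x y z : A, dq (Quotient.mk _ x) (Quotient.mk _ y) (Quotient.mk _ z) =
      Quotient.mk _ (d x y z)) :
    (Cg mq dq (Quotient.mk _ a) (Quotient.mk _ b) (Quotient.mk _ c) (Quotient.mk _ e)
      ↔ congJoin m d (Cg m d a b) r c e) ∧
    (congJoin m d (Cg m d a b) r c e ↔
      ∃ (k : ℕ) (cs ds : ℕ → A) (p : ℕ → A → A),
        cs 0 = c ∧ ds k = e ∧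
        (∀ i, i ≤ k → r (cs i) (ds i)) ∧
        (∀ i, 1 ≤ i → i ≤ k → UnaryPoly m d (p i) ∧
          ({ds (i - 1), cs i} : Set A) = {p i a, p i b})) := by
  set J := congJoin m d (Cg m d a b) r with hJ
  have Jcong : IsCongruence m d J := congJoin_isCong _ _
  have Jab : J a b := congJoin_left (cg_self a b)
  -- helper: J relates out of mk to the element
  have hout : ∀ x : A, J (Quotient.out (Quotient.mk (Setoid.mk r h.cong.equiv) x)) x := by
    intro x
    exact congJoin_right (Quotient.exact (Quotient.out_eq (Quotient.mk (Setoid.mk r h.cong.equiv) x)))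
  constructor
  · constructor
    · -- (i) → (ii)
      intro hi
      set ρ : Quotient (Setoid.mk r h.cong.equiv) → Quotient (Setoid.mk r h.cong.equiv) → Prop :=
        fun u v => J (Quotient.out u) (Quotient.out v) with hρ
      have mq_out : ∀ u v : Quotient (Setoid.mk r h.cong.equiv),
          J (Quotient.out (mq u v)) (m (Quotient.out u) (Quotient.out v)) := by
        intro u v
        have : mq u v = Quotient.mk (Setoid.mk r h.cong.equiv) (m (Quotient.out u) (Quotient.out v)) := by
          conv_lhs => rw [← Quotient.out_eq u, ← Quotient.out_eq v]
          exact hmq _ _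
        rw [this]
        exact hout _
      have dq_out : ∀ u v w : Quotient (Setoid.mk r h.cong.equiv),
          J (Quotient.out (dq u v w))
            (d (Quotient.out u) (Quotient.out v) (Quotient.out w)) := by
        intro u v w
        have : dq u v w = Quotient.mk (Setoid.mk r h.cong.equiv)
            (d (Quotient.out u) (Quotient.out v) (Quotient.out w)) := by
          conv_lhs => rw [← Quotient.out_eq u, ← Quotient.out_eq v, ← Quotient.out_eq w]
          exact hdq _ _ _
        rw [this]
        exact hout _
      have ρcong : IsCongruence mq dq ρ := by
        refine ⟨⟨fun u => Jcong.equiv.refl _, fun hxy => Jcong.equiv.symm hxy,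
          fun h1 h2 => Jcong.equiv.trans h1 h2⟩, ?_, ?_⟩
        · intro u u' v v' hu hv
          exact Jcong.equiv.trans (mq_out u v)
            (Jcong.equiv.trans (Jcong.compat_m hu hv) (Jcong.equiv.symm (mq_out u' v')))
        · intro u u' v v' w w' hu hv hw
          exact Jcong.equiv.trans (dq_out u v w)
            (Jcong.equiv.trans (Jcong.compat_d hu hv hw)
              (Jcong.equiv.symm (dq_out u' v' w')))
      have ρab : ρ (Quotient.mk (Setoid.mk r h.cong.equiv) a) (Quotient.mk (Setoid.mk r h.cong.equiv) b) :=
        Jcong.equiv.trans (hout a) (Jcong.equiv.trans Jab (Jcong.equiv.symm (hout b)))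
      have := hi ρ ρcong ρab
      exact Jcong.equiv.trans (Jcong.equiv.symm (hout c)) (Jcong.equiv.trans this (hout e))
    · -- (ii) → (i)
      intro hii
      set Θ : A → A → Prop := fun x y =>
        Cg mq dq (Quotient.mk (Setoid.mk r h.cong.equiv) a) (Quotient.mk (Setoid.mk r h.cong.equiv) b) (Quotient.mk (Setoid.mk r h.cong.equiv) x) (Quotient.mk (Setoid.mk r h.cong.equiv) y)
        with hΘ
      have Qcong := cg_isCong (m := mq) (d := dq) (Quotient.mk (Setoid.mk r h.cong.equiv) a) (Quotient.mk (Setoid.mk r h.cong.equiv) b)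
      have Θcong : IsCongruence m d Θ := by
        refine ⟨⟨fun x => Qcong.equiv.refl _, fun hxy => Qcong.equiv.symm hxy,
          fun h1 h2 => Qcong.equiv.trans h1 h2⟩, ?_, ?_⟩
        · intro x x' y y' hx hy
          show Cg mq dq _ _ (Quotient.mk (Setoid.mk r h.cong.equiv) (m x y)) (Quotient.mk (Setoid.mk r h.cong.equiv) (m x' y'))
          rw [← hmq, ← hmq]
          exact Qcong.compat_m hx hy
        · intro x x' y y' z z' hx hy hz
          show Cg mq dq _ _ (Quotient.mk (Setoid.mk r h.cong.equiv) (d x y z)) (Quotient.mk (Setoid.mk r h.cong.equiv) (d x' y' z'))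
          rw [← hdq, ← hdq]
          exact Qcong.compat_d hx hy hz
      exact hii Θ Θcong
        (fun u v huv => huv Θ Θcong (cg_self _ _))
        (fun u v huv => by
          show Cg mq dq _ _ (Quotient.mk (Setoid.mk r h.cong.equiv) u) (Quotient.mk (Setoid.mk r h.cong.equiv) v)
          rw [Quotient.sound (s := Setoid.mk r h.cong.equiv) huv]
          exact Qcong.equiv.refl _)
  · constructor
    · -- (ii) → (iii)
      intro hii
      set E : A → A → Prop := Relation.ReflTransGen (GRel m d r a b) with hE
      have Econg : IsCongruence m d E := E_isCong h.cong a b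
      have hEce : E c e := hii E Econg
        (fun u v huv => huv E Econg (E_ab a b))
        (fun u v huv => Relation.ReflTransGen.single (Or.inl huv))
      exact E_to_chain (fun x => h.cong.equiv.refl x) hEce
    · -- (iii) → (ii)
      rintro ⟨k, cs, ds, p, h0, hk, hr, hp⟩
      have hchain : Chain m d r a b c e := ⟨k, cs, ds, p, h0, hk, hr, hp⟩
      have hEce := chain_to_E hchain
      -- G ⊆ J
      have hGJ : ∀ u v, GRel m d r a b u v → J u v := by
        rintro u v (huv | ⟨q, hq, hset⟩)
        · exact congJoin_right huv
        · have hJqab : J (q a) (q b) := congJoin_left (poly_congr (cg_isCong a b) hq (cg_self a b))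
          have hu : u ∈ ({q a, q b} : Set A) := by
            rw [← hset]; exact Set.mem_insert u {v}
          have hv : v ∈ ({q a, q b} : Set A) := by
            rw [← hset]; exact Set.mem_insert_of_mem u rfl
          simp only [Set.mem_insert_iff, Set.mem_singleton_iff] at hu hv
          rcases hu with rfl | rfl <;> rcases hv with rfl | rfl
          · exact Jcong.equiv.refl _
          · exact hJqab
          · exact Jcong.equiv.symm hJqab
          · exact Jcong.equiv.refl _
      have : ∀ {u v}, Relation.ReflTransGen (GRel m d r a b) u v → J u v := by
        intro u v huv
        induction huv with
        | refl => exact Jcong.equiv.refl _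
        | tail _ hG ih => exact Jcong.equiv.trans ih (hGJ _ _ hG)
      exact this hEce
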